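/- For every ε > 0 there is a constant D_ε > 0 such that for every integer n ≥ 1 and every real R > 1, the number of matrices γ = [[a,b],[c,d]] in SL(2,ℤ) with γ ≡ I mod n, bc ≠ 0, and Euclidean norm ‖γ‖ = √(a²+b²+c²+d²) ≤ R is at most D_ε · (R^ε/n^ε) · (R²/n³ + R/n + 1). -/

import Mathlib

lemma card_icc_filter_dvd (q r lo hi : ℤ) (hq : 0 < q) (hlh : lo ≤ hi) :
    (((Finset.Icc lo hi).filter (fun x => q ∣ x - r)).card : ℝ) ≤ ((hi : ℝ) - lo) / q + 2 := by
  set s := (Finset.Icc lo hi).filter (fun x => q ∣ x - r) with hs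
  have hcard : s.card ≤ (Finset.Icc ((lo - r) / q) ((hi - r) / q)).card := by
    apply Finset.card_le_card_of_injOn (fun x => (x - r) / q)
    · intro x hx
      simp only [hs, Finset.mem_coe, Finset.mem_filter, Finset.mem_Icc] at hx
      obtain ⟨⟨h1, h2⟩, hd⟩ := hx
      have hx' : q * ((x - r) / q) = x - r := Int.mul_ediv_cancel' hd
      simp only [Finset.mem_coe, Finset.mem_Icc]
      constructor
      · calc (lo - r) / q ≤ (q * ((x - r) / q)) / q := by
              apply Int.ediv_le_ediv hq; rw [hx']; omega
          _ = (x - r) / q := by rw [Int.mul_ediv_cancel_left _ hq.ne']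
      · rw [Int.le_ediv_iff_mul_le hq, mul_comm, hx']; omega
    · intro x hx y hy hxy
      simp only [hs, Finset.coe_filter, Set.mem_setOf_eq] at hx hy
      have hx' : q * ((x - r) / q) = x - r := Int.mul_ediv_cancel' hx.2
      have hy' : q * ((y - r) / q) = y - r := Int.mul_ediv_cancel' hy.2
      simp only at hxy
      have : q * ((x - r) / q) = q * ((y - r) / q) := by rw [hxy]
      omega
  have h1 : ((hi - r) / q : ℤ) * q ≤ hi - r := by
    have := Int.mul_ediv_add_emod (hi - r) q
    have := Int.emod_nonneg (hi - r) hq.ne'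
    nlinarith
  have h2 : lo - r ≤ ((lo - r) / q) * q + (q - 1) := by
    have := Int.mul_ediv_add_emod (lo - r) q
    have := Int.emod_lt_of_pos (lo - r) hq
    nlinarith
  have hicc := Int.card_Icc ((lo - r) / q) ((hi - r) / q)
  have hle : (s.card : ℤ) ≤ (hi - r) / q - (lo - r) / q + 1 := by
    have hij : (lo - r)/q ≤ (hi - r)/q := Int.ediv_le_ediv hq (by omega)
    rw [hicc] at hcard; omega
  have hq' : (0 : ℝ) < (q : ℝ) := by exact_mod_cast hq
  have hA : (((hi - r) / q : ℤ) : ℝ) ≤ ((hi : ℝ) - r) / q := by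
    rw [le_div_iff₀ hq']; exact_mod_cast h1
  have hB : ((lo : ℝ) - r - ((q : ℝ) - 1)) / q ≤ (((lo - r) / q : ℤ) : ℝ) := by
    rw [div_le_iff₀ hq']
    have : ((lo - r : ℤ) : ℝ) ≤ (((lo - r) / q : ℤ) : ℝ) * q + ((q : ℝ) - 1) := by
      exact_mod_cast h2
    push_cast at this ⊢
    linarith
  have hle' : (s.card : ℝ) ≤ (((hi - r) / q : ℤ) : ℝ) - (((lo - r) / q : ℤ) : ℝ) + 1 := by
    exact_mod_cast hle
  have key : ((hi : ℝ) - r) / q - ((lo : ℝ) - r - ((q : ℝ) - 1)) / q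
      = ((hi : ℝ) - lo) / q + ((q : ℝ) - 1) / q := by
    field_simp
    ring
  have hq1 : ((q : ℝ) - 1) / q ≤ 1 := by
    rw [div_le_one hq']; linarith
  linarith

lemma divisor_bound (ε : ℝ) (hε : 0 < ε) :
    ∃ C : ℝ, 1 ≤ C ∧ ∀ m : ℕ, m ≠ 0 → (m.divisors.card : ℝ) ≤ C * (m : ℝ) ^ ε := by
  have h2e : (1:ℝ) < (2:ℝ) ^ ε := Real.one_lt_rpow_iff_of_pos (by norm_num) |>.2 (Or.inl ⟨by norm_num, hε⟩)
  set a : ℝ := (2:ℝ) ^ ε - 1 with ha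
  have ha0 : 0 < a := by simp [ha]; linarith
  set c₀ : ℝ := 1 / a + 1 with hc₀
  have hc₀1 : (1:ℝ) ≤ c₀ := by
    have : 0 < 1 / a := by positivity
    simp [hc₀]; linarith
  set N : ℕ := ⌈(2:ℝ) ^ (1/ε)⌉₊ + 1 with hN
  refine ⟨c₀ ^ N, one_le_pow₀ hc₀1, ?_⟩
  intro m hm
  -- per prime bound
  have key : ∀ p ∈ m.factorization.support, ∀ k : ℕ,
      ((k:ℝ) + 1) ≤ (if (p:ℝ) ^ ε < 2 then c₀ else 1) * (((p ^ k : ℕ) : ℝ)) ^ ε := by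
    intro p hp k
    have hp2 : 2 ≤ p := (Nat.prime_of_mem_primeFactors (by simpa using hp)).two_le
    have hp0 : (0:ℝ) ≤ (p:ℝ) := by positivity
    have hcast : (((p ^ k : ℕ) : ℝ)) ^ ε = ((p:ℝ) ^ ε) ^ k := by
      push_cast
      rw [← Real.rpow_natCast ((p:ℝ) ^ ε) k, ← Real.rpow_mul hp0, mul_comm,
        Real.rpow_mul hp0, Real.rpow_natCast]
    rw [hcast]
    have h2p : ((2:ℝ)) ^ ε ≤ (p:ℝ) ^ ε :=
      Real.rpow_le_rpow (by norm_num) (by exact_mod_cast hp2) hε.le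
    by_cases hsmall : (p:ℝ) ^ ε < 2
    · simp only [hsmall, if_pos]
      have hbern : 1 + (k:ℝ) * a ≤ ((2:ℝ) ^ ε) ^ k := by
        have := one_add_mul_le_pow (a := a) (by linarith) k
        simpa [ha] using this
      have hmono : ((2:ℝ) ^ ε) ^ k ≤ ((p:ℝ) ^ ε) ^ k :=
        pow_le_pow_left₀ (by positivity) h2p k
      have hca : c₀ * a = 1 + a := by rw [hc₀, add_mul, one_div, inv_mul_cancel₀ ha0.ne', one_mul]
      have : (k:ℝ) + 1 ≤ c₀ * (1 + (k:ℝ) * a) := by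
        have h1 : c₀ * (1 + (k:ℝ) * a) = c₀ + (k:ℝ) * (c₀ * a) := by ring
        rw [h1, hca]
        have : (0:ℝ) ≤ (k:ℝ) * a := by positivity
        nlinarith [Nat.cast_nonneg (α := ℝ) k]
      calc (k:ℝ) + 1 ≤ c₀ * (1 + (k:ℝ) * a) := this
        _ ≤ c₀ * ((2:ℝ) ^ ε) ^ k := by nlinarith
        _ ≤ c₀ * ((p:ℝ) ^ ε) ^ k := by nlinarith
    · simp only [hsmall, if_neg, not_false_iff, one_mul]
      push_neg at hsmall
      have h2k : ((k:ℝ) + 1) ≤ (2:ℝ) ^ k := by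
        exact_mod_cast Nat.lt_two_pow_self (n := k)
      calc ((k:ℝ) + 1) ≤ (2:ℝ) ^ k := h2k
        _ ≤ ((p:ℝ) ^ ε) ^ k := pow_le_pow_left₀ (by norm_num) hsmall k
  -- assemble
  rw [Nat.card_divisors hm]
  have hsupp : m.primeFactors = m.factorization.support := (Nat.support_factorization (n := m)).symm
  push_cast
  rw [hsupp]
  have hm' : (m : ℝ) ^ ε = (∏ p ∈ m.factorization.support, (((p ^ m.factorization p : ℕ) : ℝ))) ^ ε := by
    congr 1
    rw [← Nat.cast_prod]
    exact_mod_cast (Nat.factorization_prod_pow_eq_self hm).symm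
  rw [hm', ← Real.finset_prod_rpow _ _ (fun p _ => by positivity)]
  have step1 : ∏ p ∈ m.factorization.support, ((m.factorization p : ℝ) + 1)
      ≤ ∏ p ∈ m.factorization.support,
        ((if (p:ℝ) ^ ε < 2 then c₀ else 1) * (((p ^ m.factorization p : ℕ) : ℝ)) ^ ε) := by
    apply Finset.prod_le_prod
    · intro p _; positivity
    · intro p hp; exact key p hp _
  rw [Finset.prod_mul_distrib] at step1
  have step2 : ∏ p ∈ m.factorization.support, (if (p:ℝ) ^ ε < 2 then c₀ else 1) ≤ c₀ ^ N := by
    rw [Finset.prod_ite, Finset.prod_const, Finset.prod_const_one, mul_one]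
    apply pow_le_pow_right₀ hc₀1
    have hsub : m.factorization.support.filter (fun p : ℕ => (p:ℝ) ^ ε < 2) ⊆ Finset.range N := by
      intro p hp
      simp only [Finset.mem_filter] at hp
      have := hp.2
      have hp0 : (0:ℝ) ≤ (p:ℝ) := by positivity
      have : ((p:ℝ) ^ ε) ^ (1/ε) < (2:ℝ) ^ (1/ε) :=
        Real.rpow_lt_rpow (by positivity) this (one_div_pos.mpr hε)
      rw [← Real.rpow_mul hp0, mul_one_div, div_self hε.ne', Real.rpow_one] at this
      have h2 : ((2:ℝ) ^ (1/ε)) ≤ (⌈(2:ℝ) ^ (1/ε)⌉₊ : ℝ) := Nat.le_ceil _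
      have : (p:ℝ) < (N:ℝ) := by
        push_cast [hN]
        linarith
      simp only [Finset.mem_range]
      exact_mod_cast this
    calc (m.factorization.support.filter (fun p : ℕ => (p:ℝ) ^ ε < 2)).card
        ≤ (Finset.range N).card := Finset.card_le_card hsub
      _ = N := Finset.card_range N
  have hpos : (0:ℝ) ≤ ∏ p ∈ m.factorization.support, (((p ^ m.factorization p : ℕ) : ℝ)) ^ ε := by
    apply Finset.prod_nonneg; intro p _; positivity
  calc ∏ p ∈ m.factorization.support, ((m.factorization p : ℝ) + 1)
      ≤ (∏ p ∈ m.factorization.support, (if (p:ℝ) ^ ε < 2 then c₀ else 1))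
        * ∏ p ∈ m.factorization.support, (((p ^ m.factorization p : ℕ) : ℝ)) ^ ε := step1
    _ ≤ c₀ ^ N * ∏ p ∈ m.factorization.support, (((p ^ m.factorization p : ℕ) : ℝ)) ^ ε := by
        apply mul_le_mul_of_nonneg_right step2 hpos

set_option maxHeartbeats 1000000

open Matrix

noncomputable def matNorm (γ : Matrix.SpecialLinearGroup (Fin 2) ℤ) : ℝ :=
  Real.sqrt (((γ 0 0 : ℤ) : ℝ) ^ 2 + ((γ 0 1 : ℤ) : ℝ) ^ 2 +
    ((γ 1 0 : ℤ) : ℝ) ^ 2 + ((γ 1 1 : ℤ) : ℝ) ^ 2)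

/-- Counting matrices in SL(2,ℤ) congruent to I mod n, with bc ≠ 0, of norm ≤ R. -/
theorem counting_SL2Z :
    ∀ ε : ℝ, 0 < ε → ∃ D : ℝ, 0 < D ∧ ∀ n : ℕ, 1 ≤ n → ∀ R : ℝ, 1 < R →
      (Set.ncard {γ : Matrix.SpecialLinearGroup (Fin 2) ℤ |
          (∀ i j, (n : ℤ) ∣ (γ i j - (1 : Matrix.SpecialLinearGroup (Fin 2) ℤ) i j)) ∧
          γ 0 1 * γ 1 0 ≠ 0 ∧ matNorm γ ≤ R} : ℝ)
        ≤ D * (R ^ ε / (n : ℝ) ^ ε) * (R ^ 2 / (n : ℝ) ^ 3 + R / n + 1) := by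
  intro ε hε
  obtain ⟨C, hC1, hC⟩ := divisor_bound (ε/2) (by positivity)
  refine ⟨16 * C * (2:ℝ) ^ (ε/2), by positivity, ?_⟩
  intro n hn R hR
  classical
  set S := {γ : Matrix.SpecialLinearGroup (Fin 2) ℤ |
      (∀ i j, (n : ℤ) ∣ (γ i j - (1 : Matrix.SpecialLinearGroup (Fin 2) ℤ) i j)) ∧
      γ 0 1 * γ 1 0 ≠ 0 ∧ matNorm γ ≤ R} with hS
  set L : ℤ := ⌊R⌋ with hL
  have hL1 : 1 ≤ L := by
    rw [hL]; exact Int.le_floor.2 (by exact_mod_cast hR.le)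
  have hLR : (L : ℝ) ≤ R := Int.floor_le R
  have hR0 : (0:ℝ) < R := by linarith
  have hn0 : (0:ℤ) < (n:ℤ) := by exact_mod_cast hn
  have hnR : (0:ℝ) < (n:ℝ) := by exact_mod_cast hn
  set I : Finset ℤ := Finset.Icc (-L) L with hI
  set A : Finset ℤ := I.filter (fun x => (n:ℤ) ∣ x - 1) with hA
  set Da : ℤ → Finset ℤ := fun a => I.filter (fun d => (n:ℤ)^2 ∣ a*d - 1) with hDa
  set B : ℤ → ℤ → Finset ℤ := fun a d =>
    (((a*d - 1).natAbs / n^2).divisors.image (fun k => ((n*k : ℕ) : ℤ)))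
     ∪ (((a*d - 1).natAbs / n^2).divisors.image (fun k => -((n*k : ℕ) : ℤ))) with hB
  set T : Finset (ℤ×ℤ×ℤ) :=
    A.biUnion (fun a => (Da a).biUnion (fun d => (B a d).image (fun b => (a,d,b)))) with hT
  set F : Matrix.SpecialLinearGroup (Fin 2) ℤ → ℤ×ℤ×ℤ :=
    fun γ => (γ 0 0, γ 1 1, γ 0 1) with hF
  have hdet : ∀ γ : Matrix.SpecialLinearGroup (Fin 2) ℤ,
      γ 0 0 * γ 1 1 - γ 0 1 * γ 1 0 = 1 := by
    intro γ
    have := γ.prop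
    rw [Matrix.det_fin_two] at this
    exact this
  have hentry : ∀ γ ∈ S, ∀ i j, -L ≤ γ i j ∧ γ i j ≤ L := by
    intro γ hγ i j
    obtain ⟨-, -, hnorm⟩ := hγ
    have h0 : (0:ℝ) ≤ ((γ 0 0 : ℤ) : ℝ) ^ 2 + ((γ 0 1 : ℤ) : ℝ) ^ 2 +
        ((γ 1 0 : ℤ) : ℝ) ^ 2 + ((γ 1 1 : ℤ) : ℝ) ^ 2 := by positivity
    have hsum : ((γ 0 0 : ℤ) : ℝ) ^ 2 + ((γ 0 1 : ℤ) : ℝ) ^ 2 +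
        ((γ 1 0 : ℤ) : ℝ) ^ 2 + ((γ 1 1 : ℤ) : ℝ) ^ 2 ≤ R ^ 2 := by
      have hs := Real.sq_sqrt h0
      unfold matNorm at hnorm
      nlinarith [Real.sqrt_nonneg (((γ 0 0 : ℤ) : ℝ) ^ 2 + ((γ 0 1 : ℤ) : ℝ) ^ 2 +
        ((γ 1 0 : ℤ) : ℝ) ^ 2 + ((γ 1 1 : ℤ) : ℝ) ^ 2)]
    have hij : ((γ i j : ℤ) : ℝ) ^ 2 ≤ R ^ 2 := by
      have hnn := fun i j => sq_nonneg ((γ i j : ℤ) : ℝ)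
      fin_cases i <;> fin_cases j <;>
        first
        | exact (show ((γ 0 0 : ℤ) : ℝ) ^ 2 ≤ R ^ 2 by nlinarith [hnn 0 1, hnn 1 0, hnn 1 1])
        | exact (show ((γ 0 1 : ℤ) : ℝ) ^ 2 ≤ R ^ 2 by nlinarith [hnn 0 0, hnn 1 0, hnn 1 1])
        | exact (show ((γ 1 0 : ℤ) : ℝ) ^ 2 ≤ R ^ 2 by nlinarith [hnn 0 0, hnn 0 1, hnn 1 1])
        | exact (show ((γ 1 1 : ℤ) : ℝ) ^ 2 ≤ R ^ 2 by nlinarith [hnn 0 0, hnn 0 1, hnn 1 0])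
    have habs : -R ≤ ((γ i j : ℤ) : ℝ) ∧ ((γ i j : ℤ) : ℝ) ≤ R := by
      constructor <;> nlinarith
    constructor
    · rw [hL, ← Int.ceil_neg]
      exact Int.ceil_le.2 (by exact_mod_cast habs.1)
    · exact Int.le_floor.2 (by exact_mod_cast habs.2)
  have hsub : F '' S ⊆ ↑T := by
    rintro x ⟨γ, hγ, hFγ⟩
    obtain ⟨hcong, hbc, hnorm⟩ := hγ
    have hdet' : γ 0 0 * γ 1 1 - γ 0 1 * γ 1 0 = 1 := hdet γ
    have hna : (n:ℤ) ∣ γ 0 0 - 1 := by have := hcong 0 0; simpa [Matrix.one_apply] using this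
    have hnb : (n:ℤ) ∣ γ 0 1 := by have := hcong 0 1; simpa [Matrix.one_apply] using this
    have hnc : (n:ℤ) ∣ γ 1 0 := by have := hcong 1 0; simpa [Matrix.one_apply] using this
    obtain ⟨b₁, hb₁⟩ := hnb
    obtain ⟨c₁, hc₁⟩ := hnc
    have hb0 : γ 0 1 ≠ 0 := left_ne_zero_of_mul hbc
    have hb₁0 : b₁ ≠ 0 := by rintro rfl; simp at hb₁; exact hb0 hb₁
    have hMeq : γ 0 0 * γ 1 1 - 1 = (n:ℤ)^2 * (b₁ * c₁) := by
      have h1 : γ 0 0 * γ 1 1 - 1 = γ 0 1 * γ 1 0 := by linarith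
      rw [h1, hb₁, hc₁]; ring
    have hM0 : γ 0 0 * γ 1 1 - 1 ≠ 0 := by
      have h1 : γ 0 0 * γ 1 1 - 1 = γ 0 1 * γ 1 0 := by linarith
      rw [h1]; exact hbc
    have hnatabs : (γ 0 0 * γ 1 1 - 1).natAbs = n^2 * (b₁ * c₁).natAbs := by
      have hpw : ((n:ℤ)^2).natAbs = n^2 := by simp [Int.natAbs_pow]
      rw [hMeq, Int.natAbs_mul, hpw]
    have hmdef : (γ 0 0 * γ 1 1 - 1).natAbs / n^2 = (b₁ * c₁).natAbs := by
      rw [hnatabs]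
      exact Nat.mul_div_cancel_left _ (by positivity)
    have hmne : (b₁ * c₁).natAbs ≠ 0 := by
      intro h
      apply hM0
      have h2 : b₁ * c₁ = 0 := Int.natAbs_eq_zero.1 h
      rw [hMeq, h2, mul_zero]
    have hbmem : γ 0 1 ∈ B (γ 0 0) (γ 1 1) := by
      rw [hB]
      simp only [Finset.mem_union, Finset.mem_image, hmdef]
      have hdvd : b₁.natAbs ∈ (b₁ * c₁).natAbs.divisors :=
        Nat.mem_divisors.2 ⟨Int.natAbs_dvd_natAbs.2 ⟨c₁, rfl⟩, hmne⟩
      rcases le_or_gt 0 b₁ with hbpos | hbneg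
      · left
        exact ⟨b₁.natAbs, hdvd, by push_cast [Int.natAbs_of_nonneg hbpos]; rw [hb₁]⟩
      · right
        refine ⟨b₁.natAbs, hdvd, ?_⟩
        have : (b₁.natAbs : ℤ) = -b₁ := by
          rw [Int.ofNat_natAbs_of_nonpos hbneg.le]
        push_cast [this]
        rw [hb₁]; ring
    have hamem : γ 0 0 ∈ A := by
      rw [hA, Finset.mem_filter, hI, Finset.mem_Icc]
      exact ⟨⟨(hentry γ ⟨hcong, hbc, hnorm⟩ 0 0).1, (hentry γ ⟨hcong, hbc, hnorm⟩ 0 0).2⟩, hna⟩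
    have hdmem : γ 1 1 ∈ Da (γ 0 0) := by
      rw [hDa]
      simp only [Finset.mem_filter, hI, Finset.mem_Icc]
      exact ⟨⟨(hentry γ ⟨hcong, hbc, hnorm⟩ 1 1).1, (hentry γ ⟨hcong, hbc, hnorm⟩ 1 1).2⟩,
        ⟨b₁ * c₁, hMeq⟩⟩
    rw [← hFγ]
    rw [Finset.mem_coe, hT, Finset.mem_biUnion]
    refine ⟨γ 0 0, hamem, ?_⟩
    rw [Finset.mem_biUnion]
    refine ⟨γ 1 1, hdmem, ?_⟩
    rw [Finset.mem_image]
    exact ⟨γ 0 1, hbmem, rfl⟩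
  have hinj : S.InjOn F := by
    intro γ hγ γ' hγ' heq
    simp only [hF, Prod.mk.injEq] at heq
    obtain ⟨ha, hd, hb⟩ := heq
    have hb0 : γ 0 1 ≠ 0 := left_ne_zero_of_mul hγ.2.1
    have hc : γ 1 0 = γ' 1 0 := by
      have h1 := hdet γ
      have h2 := hdet γ'
      have : γ 0 1 * γ 1 0 = γ 0 1 * γ' 1 0 := by
        calc γ 0 1 * γ 1 0 = γ 0 0 * γ 1 1 - 1 := by linarith
          _ = γ' 0 0 * γ' 1 1 - 1 := by rw [ha, hd]
          _ = γ' 0 1 * γ' 1 0 := by linarith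
          _ = γ 0 1 * γ' 1 0 := by rw [hb]
      exact mul_left_cancel₀ hb0 this
    apply Subtype.ext
    apply Matrix.ext
    intro i j
    fin_cases i <;> fin_cases j <;> assumption
  have hcount : (S.ncard : ℝ) ≤ (T.card : ℝ) := by
    have h1 : S.ncard = (F '' S).ncard := (Set.ncard_image_of_injOn hinj).symm
    have h2 : (F '' S).ncard ≤ (↑T : Set (ℤ×ℤ×ℤ)).ncard :=
      Set.ncard_le_ncard hsub (T.finite_toSet)
    have h3 : (↑T : Set (ℤ×ℤ×ℤ)).ncard = T.card := Set.ncard_coe_finset T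
    exact_mod_cast h1 ▸ h3 ▸ h2
  -- cardinality bounds
  set X : ℝ := C * (2:ℝ) ^ (ε/2) * (R ^ ε / (n:ℝ) ^ ε) with hX
  have hX0 : 0 ≤ X := by positivity
  have hKB : ∀ a ∈ A, ∀ d ∈ Da a, ((B a d).card : ℝ) ≤ 2 * X := by
    intro a ha d hd
    have hcard2 : (B a d).card ≤ 2 * ((a*d - 1).natAbs / n^2).divisors.card := by
      rw [hB]
      calc ((((a*d - 1).natAbs / n^2).divisors.image (fun k => ((n*k : ℕ) : ℤ)))
            ∪ (((a*d - 1).natAbs / n^2).divisors.image (fun k => -((n*k : ℕ) : ℤ)))).card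
          ≤ (((a*d - 1).natAbs / n^2).divisors.image (fun k => ((n*k : ℕ) : ℤ))).card
            + (((a*d - 1).natAbs / n^2).divisors.image (fun k => -((n*k : ℕ) : ℤ))).card :=
            Finset.card_union_le _ _
        _ ≤ ((a*d - 1).natAbs / n^2).divisors.card + ((a*d - 1).natAbs / n^2).divisors.card :=
            Nat.add_le_add Finset.card_image_le Finset.card_image_le
        _ = 2 * ((a*d - 1).natAbs / n^2).divisors.card := by ring
    set m : ℕ := (a*d - 1).natAbs / n^2 with hm
    rcases eq_or_ne m 0 with hm0 | hm0
    · rw [hm0] at hcard2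
      simp [Nat.divisors_zero] at hcard2
      rw [hcard2]
      simp
      linarith
    · have hdiv := hC m hm0
      -- bound m
      have haI : -L ≤ a ∧ a ≤ L := by
        rw [hA, Finset.mem_filter, hI, Finset.mem_Icc] at ha; exact ha.1
      have hdI : -L ≤ d ∧ d ≤ L := by
        rw [hDa] at hd
        simp only [Finset.mem_filter, hI, Finset.mem_Icc] at hd; exact hd.1
      have habs : ((a*d - 1).natAbs : ℝ) ≤ 2 * R^2 := by
        have h1 : ((a*d - 1).natAbs : ℝ) = |((a*d - 1 : ℤ) : ℝ)| := by
          rw [Nat.cast_natAbs]; push_cast; ring_nf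
        rw [h1]
        have haR : |(a:ℝ)| ≤ R := by
          rw [abs_le]; constructor
          · have : ((-L : ℤ) : ℝ) ≤ (a:ℝ) := by exact_mod_cast haI.1
            push_cast at this; linarith
          · have : (a:ℝ) ≤ ((L : ℤ) : ℝ) := by exact_mod_cast haI.2
            linarith
        have hdR : |(d:ℝ)| ≤ R := by
          rw [abs_le]; constructor
          · have : ((-L : ℤ) : ℝ) ≤ (d:ℝ) := by exact_mod_cast hdI.1
            push_cast at this; linarith
          · have : (d:ℝ) ≤ ((L : ℤ) : ℝ) := by exact_mod_cast hdI.2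
            linarith
        have : |((a*d - 1 : ℤ) : ℝ)| ≤ |(a:ℝ)| * |(d:ℝ)| + 1 := by
          push_cast
          calc |(a:ℝ) * d - 1| ≤ |(a:ℝ) * d| + 1 := by
                have := abs_sub_abs_le_abs_sub ((a:ℝ)*d) 1
                have := abs_sub ((a:ℝ)*d) 1
                calc |(a:ℝ) * d - 1| ≤ |(a:ℝ)*d| + |(1:ℝ)| := abs_sub _ _
                  _ = |(a:ℝ)*d| + 1 := by simp
            _ = |(a:ℝ)| * |(d:ℝ)| + 1 := by rw [abs_mul]
        nlinarith [this, mul_le_mul haR hdR (abs_nonneg (d:ℝ)) hR0.le,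
          abs_nonneg ((a:ℝ)*d), sq_nonneg R]
      have hmR : (m:ℝ) ≤ 2 * R^2 / (n:ℝ)^2 := by
        have h1 : (m:ℝ) ≤ ((a*d-1).natAbs : ℝ) / ((n^2 : ℕ) : ℝ) := Nat.cast_div_le
        have h2 : ((n^2 : ℕ) : ℝ) = (n:ℝ)^2 := by push_cast; ring
        rw [h2] at h1
        have h3 : ((a*d-1).natAbs : ℝ) / (n:ℝ)^2 ≤ 2 * R^2 / (n:ℝ)^2 := by
          gcongr
        linarith
      have hrpow : (m:ℝ) ^ (ε/2) ≤ (2:ℝ) ^ (ε/2) * (R ^ ε / (n:ℝ) ^ ε) := by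
        have h1 : (m:ℝ) ^ (ε/2) ≤ (2 * R^2 / (n:ℝ)^2) ^ (ε/2) := by
          have hz : (0:ℝ) ≤ ε/2 := by linarith
          exact Real.rpow_le_rpow (by positivity) hmR hz
        have h2 : (2 * R^2 / (n:ℝ)^2 : ℝ) = 2 * (R/(n:ℝ))^2 := by field_simp
        have h3 : ((2:ℝ) * (R/(n:ℝ))^2) ^ (ε/2) = (2:ℝ)^(ε/2) * ((R/(n:ℝ))^2)^(ε/2) := by
          rw [Real.mul_rpow] <;> positivity
        have h4 : (((R/(n:ℝ))^2 : ℝ))^(ε/2) = (R/(n:ℝ)) ^ ε := by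
          rw [← Real.rpow_natCast (R/(n:ℝ)) 2, ← Real.rpow_mul (by positivity)]
          congr 1
          push_cast
          ring
        have h5 : (R/(n:ℝ)) ^ ε = R ^ ε / (n:ℝ) ^ ε := Real.div_rpow hR0.le hnR.le ε
        rw [h2, h3, h4, h5] at h1
        exact h1
      calc ((B a d).card : ℝ) ≤ 2 * (m.divisors.card : ℝ) := by exact_mod_cast hcard2
        _ ≤ 2 * (C * (m:ℝ) ^ (ε/2)) := by linarith
        _ ≤ 2 * (C * ((2:ℝ) ^ (ε/2) * (R ^ ε / (n:ℝ) ^ ε))) := by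
            have := mul_le_mul_of_nonneg_left hrpow (by linarith : (0:ℝ) ≤ C)
            linarith
        _ = 2 * X := by rw [hX]; ring
  have hAcard : (A.card : ℝ) ≤ 2 * R / n + 2 := by
    have := card_icc_filter_dvd (n:ℤ) 1 (-L) L hn0 (by omega)
    rw [hA, hI]
    have heq : (((L:ℤ):ℝ) - ((-L:ℤ):ℝ)) / ((n:ℤ):ℝ) = 2 * (L:ℝ) / (n:ℝ) := by
      push_cast; ring
    push_cast at this ⊢
    have h2 : 2 * (L:ℝ) / (n:ℝ) ≤ 2 * R / n := by
      gcongr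
    exact le_trans this (by ring_nf; ring_nf at h2; linarith)
  have hDacard : ∀ a ∈ A, ((Da a).card : ℝ) ≤ 2 * R / (n:ℝ)^2 + 2 := by
    intro a ha
    rw [hA, Finset.mem_filter] at ha
    obtain ⟨t, ht⟩ := ha.2
    have hcop : IsCoprime (a : ℤ) ((n:ℤ)^2) := by
      apply IsCoprime.pow_right
      exact ⟨1, -t, by linarith⟩
    obtain ⟨u, v, huv⟩ := hcop
    have hsubD : Da a ⊆ I.filter (fun d => (n:ℤ)^2 ∣ d - u) := by
      intro d hd
      rw [hDa] at hd
      simp only [Finset.mem_filter] at hd ⊢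
      obtain ⟨hdI, w, hw⟩ := hd
      refine ⟨hdI, u * w + v * d, ?_⟩
      linear_combination u * hw - d * huv
    have h1 : ((Da a).card : ℝ) ≤ ((I.filter (fun d => (n:ℤ)^2 ∣ d - u)).card : ℝ) := by
      exact_mod_cast Finset.card_le_card hsubD
    have h2 := card_icc_filter_dvd ((n:ℤ)^2) u (-L) L (by positivity) (by omega)
    rw [hI] at h1
    push_cast at h2
    have h3 : 2 * (L:ℝ) / (n:ℝ)^2 ≤ 2 * R / (n:ℝ)^2 := by
      gcongr
    exact le_trans (le_trans h1 h2) (by ring_nf; ring_nf at h3; linarith)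
  -- put it together
  have hTsum : (T.card : ℝ) ≤ (2 * R / n + 2) * ((2 * R / (n:ℝ)^2 + 2) * (2 * X)) := by
    have hnat : T.card ≤ ∑ a ∈ A, ∑ d ∈ Da a, (B a d).card := by
      refine le_trans Finset.card_biUnion_le (Finset.sum_le_sum fun a _ => ?_)
      exact le_trans Finset.card_biUnion_le (Finset.sum_le_sum fun d _ => Finset.card_image_le)
    have hcast : (T.card : ℝ) ≤ ∑ a ∈ A, ∑ d ∈ Da a, ((B a d).card : ℝ) := by
      exact_mod_cast hnat
    have hstep : ∑ a ∈ A, ∑ d ∈ Da a, ((B a d).card : ℝ)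
        ≤ ∑ a ∈ A, ((2 * R / (n:ℝ)^2 + 2) * (2 * X)) := by
      apply Finset.sum_le_sum
      intro a ha
      calc ∑ d ∈ Da a, ((B a d).card : ℝ) ≤ ∑ d ∈ Da a, (2 * X) :=
            Finset.sum_le_sum (fun d hd => hKB a ha d hd)
        _ = ((Da a).card : ℝ) * (2 * X) := by rw [Finset.sum_const, nsmul_eq_mul]
        _ ≤ (2 * R / (n:ℝ)^2 + 2) * (2 * X) := by
            apply mul_le_mul_of_nonneg_right (hDacard a ha)
            linarith
    have hstep2 : ∑ a ∈ A, ((2 * R / (n:ℝ)^2 + 2) * (2 * X))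
        ≤ (2 * R / n + 2) * ((2 * R / (n:ℝ)^2 + 2) * (2 * X)) := by
      rw [Finset.sum_const, nsmul_eq_mul]
      apply mul_le_mul_of_nonneg_right hAcard
      have : (0:ℝ) ≤ 2 * R / (n:ℝ)^2 + 2 := by positivity
      positivity
    linarith
  -- final arithmetic
  have hfinal : (2 * R / n + 2) * ((2 * R / (n:ℝ)^2 + 2) * (2 * X))
      ≤ 16 * C * (2:ℝ) ^ (ε/2) * (R ^ ε / (n:ℝ) ^ ε) * (R ^ 2 / (n : ℝ) ^ 3 + R / n + 1) := by
    have huw : (R/(n:ℝ)) * (R/(n:ℝ)^2) = R^2/(n:ℝ)^3 := by field_simp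
    have hn1 : (1:ℝ) ≤ (n:ℝ) := by exact_mod_cast hn
    have hwu : R/(n:ℝ)^2 ≤ R/(n:ℝ) := by
      gcongr <;> nlinarith [hnR, hR0, hn1]
    have hu0 : 0 ≤ R/(n:ℝ) := by positivity
    have hw0 : 0 ≤ R/(n:ℝ)^2 := by positivity
    have hRHSX : 16 * C * (2:ℝ) ^ (ε/2) * (R ^ ε / (n:ℝ) ^ ε) = 16 * X := by rw [hX]; ring
    rw [hRHSX]
    have hexp : (2 * R / n + 2) * ((2 * R / (n:ℝ)^2 + 2) * (2 * X))
        = 8 * X * ((R/(n:ℝ)) * (R/(n:ℝ)^2) + R/(n:ℝ) + R/(n:ℝ)^2 + 1) := by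
      field_simp
      ring
    rw [hexp, huw]
    have hz0 : (0:ℝ) ≤ R^2/(n:ℝ)^3 := by positivity
    nlinarith [mul_nonneg hX0 hz0, mul_nonneg hX0 hu0, hX0,
      mul_le_mul_of_nonneg_left hwu hX0]
  calc (S.ncard : ℝ) ≤ (T.card : ℝ) := hcount
    _ ≤ _ := hTsum
    _ ≤ _ := hfinal
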